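/- Define c_n = ∑_{j=1}^{⌊n/2⌋} (-1)^{j-1} · (n/j) · C(n-j-1, j-1) for n ≥ 3. Then c_n = -1 if n ≡ 0 (mod 6), c_n = 0 if n ≡ 1 or 5 (mod 6), c_n = 2 if n ≡ 2 or 4 (mod 6), and c_n = 3 if n ≡ 3 (mod 6). -/

import Mathlib

open Finset

/-- The alternating sum of the numbers of independent sets of each size in the cycle `C n`. -/
noncomputable def cAlt (n : ℕ) : ℚ :=
  ∑ j ∈ Finset.Icc 1 (n / 2),
    (-1 : ℚ) ^ (j - 1) * ((n : ℚ) / (j : ℚ)) * ((n - j - 1).choose (j - 1))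

/-- Auxiliary: `S n = ∑_{j} (-1)^j C(n-j, j)`, the Fibonacci polynomial at `-1`. -/
noncomputable def Saux (n : ℕ) : ℚ :=
  ∑ j ∈ Finset.range (n + 1), (-1 : ℚ) ^ j * ((n - j).choose j : ℚ)

lemma Saux_ext (m k : ℕ) (hk : m / 2 + 1 ≤ k) :
    ∑ j ∈ Finset.range k, (-1 : ℚ) ^ j * ((m - j).choose j : ℚ) = Saux m := by
  have h1 : ∀ K, m / 2 + 1 ≤ K →
      ∑ j ∈ Finset.range K, (-1 : ℚ) ^ j * ((m - j).choose j : ℚ)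
        = ∑ j ∈ Finset.range (m / 2 + 1), (-1 : ℚ) ^ j * ((m - j).choose j : ℚ) := by
    intro K hK
    symm
    apply Finset.sum_subset (Finset.range_subset_range.mpr hK)
    intro x _ hx
    simp only [Finset.mem_range, not_lt] at hx
    have : (m - x).choose x = 0 := Nat.choose_eq_zero_of_lt (by omega)
    simp [this]
  rw [h1 k hk, Saux, h1 (m + 1) (by omega)]

lemma Saux_rec (n : ℕ) : Saux (n + 2) = Saux (n + 1) - Saux n := by
  have key : Saux (n + 2)
      = (∑ i ∈ Finset.range (n + 2), (-1 : ℚ) ^ (i + 1) * ((n + 2 - (i + 1)).choose (i + 1) : ℚ))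
        + 1 := by
    rw [Saux, Finset.sum_range_succ']
    norm_num
  have point : ∀ i ∈ Finset.range (n + 2),
      (-1 : ℚ) ^ (i + 1) * ((n + 2 - (i + 1)).choose (i + 1) : ℚ)
        = -((-1 : ℚ) ^ i * ((n - i).choose (i + 1) : ℚ))
          - ((-1 : ℚ) ^ i * ((n - i).choose i : ℚ)) := by
    intro i hi
    simp only [Finset.mem_range] at hi
    rcases le_or_gt i n with h | h
    · have h1 : n + 2 - (i + 1) = (n - i) + 1 := by omega
      rw [h1, Nat.choose_succ_succ]
      push_cast
      ring
    · have hi' : i = n + 1 := by omega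
      subst hi'
      have e1 : n + 2 - (n + 1 + 1) = 0 := by omega
      have e2 : n - (n + 1) = 0 := by omega
      rw [e1, e2]
      simp [Nat.choose_eq_zero_of_lt]
  have hA : ∑ i ∈ Finset.range (n + 2), (-1 : ℚ) ^ i * ((n - i).choose (i + 1) : ℚ)
      = 1 - Saux (n + 1) := by
    have h1 : Saux (n + 1)
        = (∑ i ∈ Finset.range (n + 1), (-1 : ℚ) ^ (i + 1) * ((n + 1 - (i + 1)).choose (i + 1) : ℚ))
          + 1 := by
      rw [Saux, Finset.sum_range_succ']
      norm_num
    have h2 : ∑ i ∈ Finset.range (n + 2), (-1 : ℚ) ^ i * ((n - i).choose (i + 1) : ℚ)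
        = ∑ i ∈ Finset.range (n + 1), (-1 : ℚ) ^ i * ((n - i).choose (i + 1) : ℚ) := by
      rw [Finset.sum_range_succ]
      have e2 : n - (n + 1) = 0 := by omega
      rw [e2]
      simp [Nat.choose_eq_zero_of_lt]
    have h3 : ∀ i, n + 1 - (i + 1) = n - i := fun i => by omega
    rw [h2]
    have h4 : ∑ i ∈ Finset.range (n + 1), (-1 : ℚ) ^ (i + 1) * ((n + 1 - (i + 1)).choose (i + 1) : ℚ)
        = -∑ i ∈ Finset.range (n + 1), (-1 : ℚ) ^ i * ((n - i).choose (i + 1) : ℚ) := by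
      rw [← Finset.sum_neg_distrib]
      apply Finset.sum_congr rfl
      intro i _
      rw [h3 i]
      ring
    rw [h4] at h1
    linarith
  have hB : ∑ i ∈ Finset.range (n + 2), (-1 : ℚ) ^ i * ((n - i).choose i : ℚ) = Saux n :=
    Saux_ext n (n + 2) (by omega)
  rw [key, Finset.sum_congr rfl point, Finset.sum_sub_distrib, Finset.sum_neg_distrib, hA, hB]
  ring

lemma Saux_add6 (n : ℕ) : Saux (n + 6) = Saux n := by
  have h0 := Saux_rec n
  have h1 := Saux_rec (n + 1)
  have h2 := Saux_rec (n + 2)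
  have h3 := Saux_rec (n + 3)
  have h4 := Saux_rec (n + 4)
  have e1 : n + 1 + 2 = n + 3 := by omega
  have e2 : n + 2 + 2 = n + 4 := by omega
  have e3 : n + 3 + 2 = n + 5 := by omega
  have e4 : n + 4 + 2 = n + 6 := by omega
  rw [e1] at h1; rw [e2] at h2; rw [e3] at h3; rw [e4] at h4
  have : n + 1 + 1 = n + 2 := by omega
  linarith

lemma Saux_mod (n : ℕ) : Saux n = Saux (n % 6) := by
  induction n using Nat.strong_induction_on with
  | _ n ih =>
    rcases lt_or_ge n 6 with h | h
    · rw [Nat.mod_eq_of_lt h]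
    · have h1 : n = (n - 6) + 6 := by omega
      have h2 : (n - 6) % 6 = n % 6 := by omega
      conv_lhs => rw [h1, Saux_add6]
      rw [ih (n - 6) (by omega), h2]

lemma cAlt_formula (n : ℕ) (hn : 3 ≤ n) : cAlt n = 1 - Saux n + Saux (n - 2) := by
  rw [cAlt]
  have step1 : ∀ j ∈ Finset.Icc 1 (n / 2),
      (-1 : ℚ) ^ (j - 1) * ((n : ℚ) / (j : ℚ)) * ((n - j - 1).choose (j - 1))
        = (-1 : ℚ) ^ (j - 1) * ((n - j).choose j : ℚ)
          + (-1 : ℚ) ^ (j - 1) * ((n - j - 1).choose (j - 1) : ℚ) := by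
    intro j hj
    simp only [Finset.mem_Icc] at hj
    obtain ⟨hj1, hj2⟩ := hj
    obtain ⟨i, rfl⟩ : ∃ i, j = i + 1 := ⟨j - 1, by omega⟩
    obtain ⟨m, rfl⟩ : ∃ m, n = m + 2 * (i + 1) := ⟨n - 2 * (i + 1), by omega⟩
    have e1 : m + 2 * (i + 1) - (i + 1) = m + i + 1 := by omega
    have e2 : m + 2 * (i + 1) - (i + 1) - 1 = m + i := by omega
    have e3 : i + 1 - 1 = i := by omega
    rw [e2, e1, e3]
    have key : (m + i + 1) * (m + i).choose i = (m + i + 1).choose (i + 1) * (i + 1) :=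
      Nat.add_one_mul_choose_eq (m + i) i
    have keyQ : ((m + i + 1 : ℕ) : ℚ) * ((m + i).choose i : ℚ)
        = ((m + i + 1).choose (i + 1) : ℚ) * ((i + 1 : ℕ) : ℚ) := by
      exact_mod_cast congrArg (Nat.cast : ℕ → ℚ) key
    have hi0 : ((i : ℚ) + 1) ≠ 0 := by positivity
    field_simp
    push_cast at keyQ ⊢
    linear_combination keyQ
  rw [Finset.sum_congr rfl step1, Finset.sum_add_distrib]
  have reidx : ∀ f : ℕ → ℚ, ∑ j ∈ Finset.Icc 1 (n / 2), f j = ∑ i ∈ Finset.range (n / 2), f (i + 1) := by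
    intro f
    rw [← Finset.Ico_add_one_right_eq_Icc, Finset.sum_Ico_eq_sum_range]
    apply Finset.sum_congr (by congr 1)
    intro i _
    congr 1
    omega
  have hfirst : ∑ j ∈ Finset.Icc 1 (n / 2), (-1 : ℚ) ^ (j - 1) * ((n - j).choose j : ℚ)
      = 1 - Saux n := by
    rw [reidx]
    have h1 : Saux n
        = (∑ i ∈ Finset.range n, (-1 : ℚ) ^ (i + 1) * ((n - (i + 1)).choose (i + 1) : ℚ)) + 1 := by
      rw [Saux, Finset.sum_range_succ']
      norm_num
    have h2 : ∑ i ∈ Finset.range (n / 2), (-1 : ℚ) ^ (i + 1 - 1) * ((n - (i + 1)).choose (i + 1) : ℚ)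
        = ∑ i ∈ Finset.range n, (-1 : ℚ) ^ i * ((n - (i + 1)).choose (i + 1) : ℚ) := by
      rw [show ∀ S : Finset ℕ, ∑ i ∈ S, (-1 : ℚ) ^ (i + 1 - 1) * ((n - (i + 1)).choose (i + 1) : ℚ)
          = ∑ i ∈ S, (-1 : ℚ) ^ i * ((n - (i + 1)).choose (i + 1) : ℚ) from fun S =>
          Finset.sum_congr rfl (fun i _ => by rw [Nat.add_sub_cancel])]
      apply Finset.sum_subset (Finset.range_subset_range.mpr (by omega))
      intro x _ hx
      simp only [Finset.mem_range, not_lt] at hx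
      have : (n - (x + 1)).choose (x + 1) = 0 := Nat.choose_eq_zero_of_lt (by omega)
      simp [this]
    have h3 : ∑ i ∈ Finset.range n, (-1 : ℚ) ^ (i + 1) * ((n - (i + 1)).choose (i + 1) : ℚ)
        = -∑ i ∈ Finset.range n, (-1 : ℚ) ^ i * ((n - (i + 1)).choose (i + 1) : ℚ) := by
      rw [← Finset.sum_neg_distrib]
      apply Finset.sum_congr rfl
      intro i _
      ring
    rw [h2]
    rw [h3] at h1
    linarith
  have hsecond : ∑ j ∈ Finset.Icc 1 (n / 2), (-1 : ℚ) ^ (j - 1) * ((n - j - 1).choose (j - 1) : ℚ)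
      = Saux (n - 2) := by
    rw [reidx]
    have h1 : ∑ i ∈ Finset.range (n / 2), (-1 : ℚ) ^ (i + 1 - 1) * ((n - (i + 1) - 1).choose (i + 1 - 1) : ℚ)
        = ∑ i ∈ Finset.range (n / 2), (-1 : ℚ) ^ i * (((n - 2) - i).choose i : ℚ) := by
      apply Finset.sum_congr rfl
      intro i _
      have e : n - (i + 1) - 1 = n - 2 - i := by omega
      rw [Nat.add_sub_cancel, e]
    rw [h1, Saux_ext (n - 2) (n / 2) (by omega)]
  rw [hfirst, hsecond]

lemma Saux0 : Saux 0 = 1 := by norm_num [Saux]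
lemma Saux1 : Saux 1 = 1 := by norm_num [Saux, Finset.sum_range_succ]
lemma Saux2 : Saux 2 = 0 := by norm_num [Saux, Finset.sum_range_succ]
lemma Saux3 : Saux 3 = -1 := by norm_num [Saux, Finset.sum_range_succ]
lemma Saux4 : Saux 4 = -1 := by norm_num [Saux, Finset.sum_range_succ, Nat.choose]
lemma Saux5 : Saux 5 = 0 := by norm_num [Saux, Finset.sum_range_succ, Nat.choose]

theorem stmt_8 (n : ℕ) (hn : 3 ≤ n) :
    (n % 6 = 0 → cAlt n = -1) ∧
    (n % 6 = 1 ∨ n % 6 = 5 → cAlt n = 0) ∧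
    (n % 6 = 2 ∨ n % 6 = 4 → cAlt n = 2) ∧
    (n % 6 = 3 → cAlt n = 3) := by
  have hf : cAlt n = 1 - Saux n + Saux (n - 2) := cAlt_formula n hn
  have hs : Saux n = Saux (n % 6) := Saux_mod n
  have hs2 : Saux (n - 2) = Saux ((n - 2) % 6) := Saux_mod (n - 2)
  refine ⟨?_, ?_, ?_, ?_⟩
  · intro h
    have h2 : (n - 2) % 6 = 4 := by omega
    rw [hf, hs, hs2, h, h2, Saux0, Saux4]; norm_num
  · rintro (h | h)
    · have h2 : (n - 2) % 6 = 5 := by omega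
      rw [hf, hs, hs2, h, h2, Saux1, Saux5]; norm_num
    · have h2 : (n - 2) % 6 = 3 := by omega
      rw [hf, hs, hs2, h, h2, Saux5, Saux3]; norm_num
  · rintro (h | h)
    · have h2 : (n - 2) % 6 = 0 := by omega
      rw [hf, hs, hs2, h, h2, Saux2, Saux0]; norm_num
    · have h2 : (n - 2) % 6 = 2 := by omega
      rw [hf, hs, hs2, h, h2, Saux4, Saux2]; norm_num
  · intro h
    have h2 : (n - 2) % 6 = 1 := by omega
    rw [hf, hs, hs2, h, h2, Saux3, Saux1]; norm_num
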